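/- Equilibria of the hybrid system: (x,q) ∈ X is an equilibrium (every solution from it stays constant) if and only if there exists k ∈ ℤ such that either q_i = kΔ for all i or q_i = kΔ + Δ/2 for all i, and in both cases q_i − Δ/2 < x_i < q_i + Δ/2 for all i. -/

import Mathlib

open Matrix

lemma mulVec_lap {N : ℕ} (A : Matrix (Fin N) (Fin N) ℝ) (q : Fin N → ℝ) (i : Fin N) :
    ((Matrix.diagonal (fun i => ∑ j, A i j) - A).mulVec q) i = ∑ j, A i j * (q i - q j) := by
  simp only [Matrix.mulVec, dotProduct, Matrix.sub_apply, sub_mul,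
    Finset.sum_sub_distrib, mul_sub, Matrix.diagonal_apply, ite_mul, zero_mul,
    Finset.sum_ite_eq, Finset.mem_univ, if_true, Finset.sum_mul]

lemma ker_lap {N : ℕ} (A : Matrix (Fin N) (Fin N) ℝ) (hA : ∀ i j, 0 ≤ A i j)
    (hbal : ∀ i, ∑ j, A i j = ∑ j, A j i)
    (q : Fin N → ℝ) (hq : ∀ i, ∑ j, A i j * (q i - q j) = 0) :
    ∀ i j, A i j ≠ 0 → q i = q j := by
  have hq' : ∀ i, ∑ j, A i j * q j = (∑ j, A i j) * q i := by
    intro i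
    have h0 : ∑ j, (A i j * q i - A i j * q j) = 0 := by
      simpa [mul_sub] using hq i
    rw [Finset.sum_sub_distrib] at h0
    have h2 : ∑ j, A i j * q i = (∑ j, A i j) * q i := (Finset.sum_mul _ _ _).symm
    linarith
  have step1 : ∀ i, ∑ j, A i j * (q i - q j)^2
      = ∑ j, A i j * q j^2 - (∑ j, A i j) * q i^2 := by
    intro i
    have e1 : ∑ j, A i j * (q i - q j)^2
        = q i * ∑ j, A i j * (q i - q j) - ∑ j, (A i j * q i * q j - A i j * q j^2) := by
      rw [Finset.mul_sum, ← Finset.sum_sub_distrib]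
      exact Finset.sum_congr rfl fun j _ => by ring
    rw [e1, hq i, mul_zero, zero_sub, Finset.sum_sub_distrib]
    have e2 : ∑ j, A i j * q i * q j = (∑ j, A i j) * q i^2 := by
      calc ∑ j, A i j * q i * q j = q i * ∑ j, A i j * q j := by
            rw [Finset.mul_sum]; exact Finset.sum_congr rfl fun j _ => by ring
        _ = (∑ j, A i j) * q i ^ 2 := by rw [hq' i]; ring
    rw [e2]; ring
  have hS : ∑ i, ∑ j, A i j * (q i - q j)^2 = 0 := by
    calc ∑ i, ∑ j, A i j * (q i - q j)^2
        = ∑ i, (∑ j, A i j * q j^2 - (∑ j, A i j) * q i^2) :=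
          Finset.sum_congr rfl fun i _ => step1 i
      _ = ∑ i, ∑ j, A i j * q j^2 - ∑ i, (∑ j, A i j) * q i^2 := Finset.sum_sub_distrib _ _
      _ = 0 := by
          rw [Finset.sum_comm]
          have e3 : ∀ j : Fin N, ∑ i, A i j * q j ^ 2 = (∑ i, A j i) * q j ^ 2 := by
            intro j
            rw [← Finset.sum_mul, ← hbal j]
          rw [Finset.sum_congr rfl fun j _ => e3 j, sub_self]
  have hterm : ∀ i ∈ Finset.univ, ∀ j ∈ Finset.univ, A i j * (q i - q j)^2 = 0 := by
    have h1 := (Finset.sum_eq_zero_iff_of_nonneg (fun i _ =>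
      Finset.sum_nonneg fun j _ => mul_nonneg (hA i j) (sq_nonneg _))).mp hS
    intro i hi j hj
    exact (Finset.sum_eq_zero_iff_of_nonneg fun j _ =>
      mul_nonneg (hA i j) (sq_nonneg _)).mp (h1 i hi) j hj
  intro i j hij
  have := hterm i (Finset.mem_univ i) j (Finset.mem_univ j)
  rcases mul_eq_zero.mp this with h | h
  · exact absurd h hij
  · have := pow_eq_zero_iff (n := 2) (by norm_num) |>.mp h
    linarith [sub_eq_zero.mp this]

/-- the discrete jump sequence with constant plant value `w`. -/
noncomputable def jumpSeq {N : ℕ} (Δ : ℝ) (w q0 : Fin N → ℝ) : ℕ → Fin N → ℝ :=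
  fun n => Nat.rec q0 (fun _ qj i =>
    if qj i + Δ / 2 ≤ w i then qj i + Δ / 2
    else if w i ≤ qj i - Δ / 2 then qj i - Δ / 2 else qj i) n

lemma jumpSeq_zero {N : ℕ} (Δ : ℝ) (w q0 : Fin N → ℝ) : jumpSeq Δ w q0 0 = q0 := rfl

lemma jumpSeq_succ {N : ℕ} (Δ : ℝ) (w q0 : Fin N → ℝ) (n : ℕ) (i : Fin N) :
    jumpSeq Δ w q0 (n + 1) i =
      if jumpSeq Δ w q0 n i + Δ / 2 ≤ w i then jumpSeq Δ w q0 n i + Δ / 2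
      else if w i ≤ jumpSeq Δ w q0 n i - Δ / 2 then jumpSeq Δ w q0 n i - Δ / 2
      else jumpSeq Δ w q0 n i := rfl

theorem hybrid_equilibria (N : ℕ) [NeZero N] (Δ : ℝ) (hΔ : 0 < Δ)
    (A : Matrix (Fin N) (Fin N) ℝ)
    (hA : ∀ i j, 0 ≤ A i j) (hdiag : ∀ i, A i i = 0)
    (hbal : ∀ i, ∑ j, A i j = ∑ j, A j i)
    (hconn : ∀ i j : Fin N,
      Relation.ReflTransGen (fun a b => A a b ≠ 0 ∨ A b a ≠ 0) i j)
    (L : Matrix (Fin N) (Fin N) ℝ)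
    (hL : L = (Matrix.diagonal fun i => ∑ j, A i j) - A)
    (x₀ q₀ : Fin N → ℝ)
    (hq₀ : ∀ i, ∃ m : ℤ, q₀ i = m * (Δ / 2)) :
    (∀ (τ : ℕ → ℝ) (x : ℕ → ℝ → Fin N → ℝ) (q : ℕ → Fin N → ℝ),
      τ 0 = 0 → Monotone τ → x 0 0 = x₀ → q 0 = q₀ →
      (∀ j, ∀ s ∈ Set.Icc (τ j) (τ (j + 1)),
        x j s = x j (τ j) + (s - τ j) • (-(L.mulVec (q j)))) →
      (∀ j, ∀ s ∈ Set.Ico (τ j) (τ (j + 1)), ∀ i, |x j s i - q j i| < Δ / 2) →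
      (∀ j, x (j + 1) (τ (j + 1)) = x j (τ (j + 1))) →
      (∀ j i, q (j + 1) i =
        if q j i + Δ / 2 ≤ x j (τ (j + 1)) i then q j i + Δ / 2
        else if x j (τ (j + 1)) i ≤ q j i - Δ / 2 then q j i - Δ / 2
        else q j i) →
      (∀ j, ∀ s ∈ Set.Icc (τ j) (τ (j + 1)), x j s = x₀ ∧ q j = q₀))
    ↔ ((∃ k : ℤ, (q₀ = fun _ => k * Δ) ∨ (q₀ = fun _ => k * Δ + Δ / 2)) ∧
        (∀ i, q₀ i - Δ / 2 < x₀ i ∧ x₀ i < q₀ i + Δ / 2)) := by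
  haveI : Nonempty (Fin N) := ⟨⟨0, Nat.pos_of_ne_zero (NeZero.ne N)⟩⟩
  constructor
  · intro H
    -- Step 1: (x₀, q₀) is in the flow set C
    have hC : ∀ i, q₀ i - Δ / 2 < x₀ i ∧ x₀ i < q₀ i + Δ / 2 := by
      have R := H (fun _ => 0) (fun _ _ => x₀) (jumpSeq Δ x₀ q₀)
        rfl monotone_const rfl rfl
        (by
          intro j s hs
          have hs0 : s = 0 := le_antisymm hs.2 hs.1
          subst hs0
          funext i
          simp)
        (by
          intro j s hs
          simp only [Set.mem_Ico] at hs
          exact absurd (lt_of_le_of_lt hs.1 hs.2) (lt_irrefl _))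
        (fun j => rfl)
        (fun j i => rfl)
      have h1 : jumpSeq Δ x₀ q₀ 1 = q₀ :=
        (R 1 0 ⟨le_refl _, le_refl _⟩).2
      intro i
      have h1i := congrFun h1 i
      rw [jumpSeq_succ, jumpSeq_zero] at h1i
      by_cases hc1 : q₀ i + Δ / 2 ≤ x₀ i
      · rw [if_pos hc1] at h1i; linarith
      · rw [if_neg hc1] at h1i
        by_cases hc2 : x₀ i ≤ q₀ i - Δ / 2
        · rw [if_pos hc2] at h1i; linarith
        · exact ⟨by linarith [not_le.mp hc2], not_le.mp hc1⟩
    -- Step 2: L q₀ = 0 via a flowing solution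
    set v : Fin N → ℝ := fun i => -(L.mulVec q₀ i) with hv
    have habs : ∀ i, |x₀ i - q₀ i| < Δ / 2 := fun i =>
      abs_lt.mpr ⟨by linarith [(hC i).1], by linarith [(hC i).2]⟩
    set δ : Fin N → ℝ := fun i => (Δ / 2 - |x₀ i - q₀ i|) / (|v i| + 1) with hδ
    have hδpos : ∀ i, 0 < δ i := fun i =>
      div_pos (by linarith [habs i]) (by positivity)
    set ε : ℝ := Finset.univ.inf' Finset.univ_nonempty δ with hε
    have hεpos : 0 < ε := by
      rw [hε, Finset.lt_inf'_iff]
      exact fun i _ => hδpos i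
    have hεδ : ∀ i, ε ≤ δ i := fun i => Finset.inf'_le _ (Finset.mem_univ i)
    set w : Fin N → ℝ := fun i => x₀ i + ε * v i with hw
    set τ' : ℕ → ℝ := fun j => if j = 0 then 0 else ε with hτ'
    have hτ'0 : τ' 0 = 0 := rfl
    have hτ's : ∀ j : ℕ, τ' (j + 1) = ε := fun j => by simp [hτ']
    set x' : ℕ → ℝ → Fin N → ℝ := fun j s i => x₀ i + (if j = 0 then s else ε) * v i
      with hx'
    have hx'0 : ∀ s i, x' 0 s i = x₀ i + s * v i := fun s i => by simp [hx']
    have hx's : ∀ (j : ℕ) (s : ℝ) i, x' (j + 1) s i = x₀ i + ε * v i := fun j s i => by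
      simp [hx']
    have hvdef : ∀ i, v i = -(L.mulVec q₀ i) := fun i => rfl
    have hLq : L.mulVec q₀ = 0 := by
      have R := H τ' x' (jumpSeq Δ w q₀)
        hτ'0
        (by
          intro a b hab
          by_cases ha : a = 0
          · by_cases hb : b = 0
            · simp [hτ', ha, hb]
            · simp [hτ', ha, hb, hεpos.le]
          · have hb : b ≠ 0 := by omega
            simp [hτ', ha, hb])
        (by funext i; rw [hx'0]; ring)
        rfl
        (by
          intro j s hs
          funext i
          simp only [Pi.add_apply, Pi.smul_apply, Pi.neg_apply, smul_eq_mul]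
          cases j with
          | zero =>
            rw [hτ'0, hx'0, hx'0, jumpSeq_zero, ← hvdef i]
            ring
          | succ j =>
            rw [hτ's] at hs ⊢
            rw [hτ's] at hs
            have hsε : s = ε := le_antisymm hs.2 hs.1
            subst hsε
            rw [hx's]
            ring
        )
        (by
          intro j s hs i
          cases j with
          | zero =>
            rw [Set.mem_Ico, hτ'0, hτ's] at hs
            rw [hx'0, jumpSeq_zero]
            have hlt : s < δ i := lt_of_lt_of_le hs.2 (hεδ i)
            have h1 : s * (|v i| + 1) < Δ / 2 - |x₀ i - q₀ i| := by
              rw [hδ] at hlt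
              exact (lt_div_iff₀ (by positivity)).mp hlt
            have h2 : |s * v i| ≤ s * (|v i| + 1) := by
              rw [abs_mul, abs_of_nonneg hs.1]
              nlinarith [hs.1, abs_nonneg (v i)]
            calc |x₀ i + s * v i - q₀ i| = |(x₀ i - q₀ i) + s * v i| := by ring_nf
              _ ≤ |x₀ i - q₀ i| + |s * v i| := abs_add_le _ _
              _ < Δ / 2 := by linarith [habs i]
          | succ j =>
            rw [Set.mem_Ico, hτ's, hτ's] at hs
            exact absurd (lt_of_le_of_lt hs.1 hs.2) (lt_irrefl _))
        (by
          intro j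
          funext i
          rw [hτ's, hx's]
          cases j with
          | zero => rw [hx'0]
          | succ j => rw [hx's])
        (by
          intro j i
          have hxw : x' j (τ' (j + 1)) i = w i := by
            rw [hτ's, hw]
            cases j with
            | zero => rw [hx'0]
            | succ j => rw [hx's]
          rw [hxw]
          exact jumpSeq_succ Δ w q₀ j i)
      have hmem : ε ∈ Set.Icc (τ' 0) (τ' 1) := by
        rw [Set.mem_Icc, hτ'0, hτ's]
        exact ⟨hεpos.le, le_refl _⟩
      have hR := (R 0 ε hmem).1
      funext i
      have h3 := congrFun hR i
      rw [hx'0] at h3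
      have h4 : ε * v i = 0 := by linarith
      have h5 : v i = 0 := by
        rcases mul_eq_zero.mp h4 with h | h
        · exact absurd h (ne_of_gt hεpos)
        · exact h
      rw [hvdef i] at h5
      simpa [neg_eq_zero] using h5
    -- q₀ is constant
    have hedge : ∀ i j, A i j ≠ 0 → q₀ i = q₀ j := by
      apply ker_lap A hA hbal
      intro i
      have h6 := congrFun hLq i
      rw [hL] at h6
      rw [← mulVec_lap A q₀ i]
      simpa using h6
    have hconst : ∀ i j, q₀ i = q₀ j := by
      intro i j
      induction hconn i j with
      | refl => rfl
      | tail _ e ih =>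
        rcases e with h | h
        · exact ih.trans (hedge _ _ h)
        · exact ih.trans (hedge _ _ h).symm
    refine ⟨?_, hC⟩
    obtain ⟨m, hm⟩ := hq₀ ⟨0, Nat.pos_of_ne_zero (NeZero.ne N)⟩
    rcases Int.even_or_odd m with ⟨k, hk⟩ | ⟨k, hk⟩
    · exact ⟨k, Or.inl (funext fun i => by
        rw [hconst i ⟨0, Nat.pos_of_ne_zero (NeZero.ne N)⟩, hm, hk]
        push_cast; ring)⟩
    · exact ⟨k, Or.inr (funext fun i => by
        rw [hconst i ⟨0, Nat.pos_of_ne_zero (NeZero.ne N)⟩, hm, hk]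
        push_cast; ring)⟩
  · rintro ⟨⟨k, hk⟩, hC⟩
    have hconst : ∀ i j, q₀ i = q₀ j := by
      rcases hk with h | h <;> (intro i j; rw [h])
    have hLq : L.mulVec q₀ = 0 := by
      funext i
      rw [hL, mulVec_lap]
      simpa using Finset.sum_eq_zero fun j _ => by
        rw [sub_eq_zero.mpr (hconst i j), mul_zero]
    intro τ x q hτ0 hmono hx0 hq0 hflow hflowset hjcont hjmap
    have key : ∀ j, x j (τ j) = x₀ ∧ q j = q₀ := by
      intro j
      induction j with
      | zero => exact ⟨by rw [hτ0, hx0], hq0⟩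
      | succ j ih =>
        have hxτ : x j (τ (j + 1)) = x₀ := by
          rw [hflow j (τ (j + 1)) ⟨hmono (Nat.le_succ j), le_refl _⟩, ih.1, ih.2, hLq]
          simp
        constructor
        · rw [hjcont j, hxτ]
        · funext i
          rw [hjmap j i, ih.2, hxτ]
          rw [if_neg (not_le.mpr (hC i).2), if_neg (not_le.mpr (hC i).1)]
    intro j s hs
    refine ⟨?_, (key j).2⟩
    rw [hflow j s hs, (key j).1, (key j).2, hLq]
    simp
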